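/- For every fixed y ∈ ℝ, lim_{k→∞} (2πk)^{1/4}·√(2^k/k!)·(√(k/2)+y)^k·e^{−(√(k/2)+y)²} = e^{−2y²}. That is, near its peak at √(k/2) the basis function ψ_k(x) = √(2^k/k!)·x^k·e^{−x²} is asymptotically the Gaussian profile (2πk)^{−1/4}·e^{−2(x−√(k/2))²}. -/

import Mathlib

open Filter

/-- Near its peak at `√(k/2)`, the basis function `ψ k x = √(2^k/k!) x^k e^{-x²}`
is asymptotically the Gaussian profile `(2πk)^(-1/4) * exp (-2(x - √(k/2))²)`:
for every fixed `y`,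
`(2πk)^(1/4) * ψ k (√(k/2) + y) → exp (-2y²)` as `k → ∞`. -/
private lemma sqrt_pow_nat {x : ℝ} (hx : 0 ≤ x) (k : ℕ) :
    Real.sqrt (x ^ k) = Real.sqrt x ^ k := by
  induction k with
  | zero => simp
  | succ n ih => rw [pow_succ, pow_succ, Real.sqrt_mul (by positivity), ih]

private lemma log_quad_bound {x : ℝ} (h : |x| < 1) :
    |Real.log (1 + x) - x + x ^ 2 / 2| ≤ |x| ^ 3 / (1 - |x|) := by
  have h' : |(-x)| < 1 := by rwa [abs_neg]
  have key := Real.abs_log_sub_add_sum_range_le h' 2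
  have e1 : (∑ i ∈ Finset.range 2, (-x) ^ (i + 1) / (i + 1)) + Real.log (1 - -x)
      = Real.log (1 + x) - x + x ^ 2 / 2 := by
    rw [Finset.sum_range_succ, Finset.sum_range_one, sub_neg_eq_add]
    push_cast; ring
  rw [e1, abs_neg] at key
  simpa using key

private lemma core_limit (y : ℝ) :
    Tendsto (fun k : ℕ => (k : ℝ) * Real.log (1 + y * Real.sqrt (2 / k))
        - y * Real.sqrt (2 * k)) atTop (nhds (-y ^ 2)) := by
  have h0 : Tendsto (fun k : ℕ => ((k : ℝ) * Real.log (1 + y * Real.sqrt (2 / k))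
      - y * Real.sqrt (2 * k)) + y ^ 2) atTop (nhds 0) := by
    apply squeeze_zero_norm' (a := fun k : ℕ => (4 * |y| ^ 3) * Real.sqrt (2 / k))
    · filter_upwards [eventually_ge_atTop (⌈8 * y ^ 2⌉₊ + 1)] with k hk
      have kpos : (0 : ℝ) < k := by
        have : 1 ≤ k := le_trans (Nat.le_add_left 1 _) hk
        exact_mod_cast Nat.pos_of_ne_zero (by omega)
      have hk8 : 8 * y ^ 2 + 1 ≤ (k : ℝ) := by
        have h1 : (⌈8 * y ^ 2⌉₊ : ℝ) + 1 ≤ (k : ℝ) := by exact_mod_cast hk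
        have h2 : 8 * y ^ 2 ≤ (⌈8 * y ^ 2⌉₊ : ℝ) := Nat.le_ceil _
        linarith
      set t : ℝ := Real.sqrt (2 / k) with ht
      have htnn : 0 ≤ t := Real.sqrt_nonneg _
      have ht2 : t ^ 2 = 2 / k := Real.sq_sqrt (by positivity)
      set x : ℝ := y * t with hx
      have hx2 : x ^ 2 = y ^ 2 * (2 / k) := by rw [hx, mul_pow, ht2]
      have hx2le : x ^ 2 ≤ 1 / 4 := by
        rw [hx2, show y ^ 2 * (2 / (k:ℝ)) = 2 * y ^ 2 / k by ring, div_le_iff₀ kpos]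
        nlinarith [sq_nonneg y]
      have hxle : |x| ≤ 1 / 2 := by
        have := sq_abs x
        nlinarith [abs_nonneg x]
      have hxlt : |x| < 1 := lt_of_le_of_lt hxle (by norm_num)
      have hkx : (k : ℝ) * x = y * Real.sqrt (2 * k) := by
        have : Real.sqrt (2 * k) = (k : ℝ) * t := by
          rw [ht, show (2 * (k : ℝ)) = (k:ℝ) ^ 2 * (2 / k) by field_simp,
            Real.sqrt_mul (by positivity), Real.sqrt_sq kpos.le]
        rw [this, hx]; ring
      have hkx2 : (k : ℝ) * (x ^ 2 / 2) = y ^ 2 := by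
        rw [hx2]; field_simp
      have hid : (k : ℝ) * Real.log (1 + y * Real.sqrt (2 / k)) - y * Real.sqrt (2 * k) + y ^ 2
          = (k : ℝ) * (Real.log (1 + x) - x + x ^ 2 / 2) := by
        rw [mul_add, mul_sub, hkx2, hkx]
      rw [hid, Real.norm_eq_abs, abs_mul, abs_of_nonneg kpos.le]
      have hb := log_quad_bound hxlt
      have hb2 : |x| ^ 3 / (1 - |x|) ≤ 2 * |x| ^ 3 := by
        rw [div_le_iff₀ (by linarith)]
        nlinarith [pow_nonneg (abs_nonneg x) 3]
      have hxabs : |x| = |y| * t := by rw [hx, abs_mul, abs_of_nonneg htnn]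
      have hkt3 : (k : ℝ) * (2 * (|y| * t) ^ 3) = (4 * |y| ^ 3) * t := by
        have : t ^ 3 = (2 / k) * t := by rw [pow_succ, ht2]
        rw [mul_pow, this]; field_simp; ring
      calc (k : ℝ) * |Real.log (1 + x) - x + x ^ 2 / 2|
          ≤ (k : ℝ) * (2 * |x| ^ 3) := by
            apply mul_le_mul_of_nonneg_left (le_trans hb hb2) kpos.le
        _ = (4 * |y| ^ 3) * t := by rw [hxabs, hkt3]
    · have h1 : Tendsto (fun k : ℕ => (2 : ℝ) / k) atTop (nhds 0) :=
        tendsto_const_div_atTop_nhds_zero_nat 2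
      have h2 : Tendsto (fun k : ℕ => Real.sqrt (2 / k)) atTop (nhds 0) := by
        rw [show (0:ℝ) = Real.sqrt 0 by simp]
        exact (Real.continuous_sqrt.tendsto 0).comp h1
      have h3 := h2.const_mul (4 * |y| ^ 3)
      rw [mul_zero] at h3
      exact h3
  have := h0.sub_const (y ^ 2)
  simpa using this

private lemma key_identity (y : ℝ) (k : ℕ) (hk : 2 * y ^ 2 < (k : ℝ)) :
    Real.pi ^ ((1 : ℝ) / 4) / Real.sqrt (Stirling.stirlingSeq k) *
        Real.exp ((k : ℝ) * Real.log (1 + y * Real.sqrt (2 / k))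
          - y * Real.sqrt (2 * k) - y ^ 2) =
      (2 * Real.pi * (k : ℝ)) ^ ((1 : ℝ) / 4) *
        Real.sqrt (2 ^ k / (Nat.factorial k : ℝ)) *
        (Real.sqrt ((k : ℝ) / 2) + y) ^ k *
        Real.exp (-(Real.sqrt ((k : ℝ) / 2) + y) ^ 2) := by
  have kpos : (0 : ℝ) < k := lt_of_le_of_lt (by positivity) hk
  have knz : (k : ℝ) ≠ 0 := ne_of_gt kpos
  have epos : (0 : ℝ) < Real.exp 1 := Real.exp_pos 1
  have hy2 : y ^ 2 < (k : ℝ) / 2 := by linarith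
  have hS : |y| < Real.sqrt ((k : ℝ) / 2) := by
    have := Real.sqrt_lt_sqrt (sq_nonneg y) hy2
    rwa [Real.sqrt_sq_eq_abs] at this
  have hSy : 0 < Real.sqrt ((k : ℝ) / 2) + y := by
    have := neg_abs_le y; linarith
  have htpos : 0 < Real.sqrt (2 / (k : ℝ)) := Real.sqrt_pos.mpr (by positivity)
  have htS : Real.sqrt (2 / (k : ℝ)) * Real.sqrt ((k : ℝ) / 2) = 1 := by
    rw [← Real.sqrt_mul (by positivity), show (2 / (k : ℝ)) * ((k : ℝ) / 2) = 1 by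
      field_simp]
    exact Real.sqrt_one
  have h1 : 1 + y * Real.sqrt (2 / (k : ℝ))
      = Real.sqrt (2 / (k : ℝ)) * (Real.sqrt ((k : ℝ) / 2) + y) := by
    rw [mul_add, htS]; ring
  have h1pos : 0 < 1 + y * Real.sqrt (2 / (k : ℝ)) := by
    rw [h1]; exact mul_pos htpos hSy
  -- exponent of the peak
  have hSsq : Real.sqrt ((k : ℝ) / 2) ^ 2 = (k : ℝ) / 2 := Real.sq_sqrt (by positivity)
  have h2k : Real.sqrt (2 * (k : ℝ)) = 2 * Real.sqrt ((k : ℝ) / 2) := by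
    rw [show 2 * (k : ℝ) = 2 ^ 2 * ((k : ℝ) / 2) by ring,
      Real.sqrt_mul (by positivity), Real.sqrt_sq (by norm_num)]
  have hexp2 : -(Real.sqrt ((k : ℝ) / 2) + y) ^ 2
      = -((k : ℝ) / 2) - y * Real.sqrt (2 * (k : ℝ)) - y ^ 2 := by
    rw [h2k]; nlinarith [hSsq]
  -- expand exp of the k-th log power
  have hexpk : Real.exp ((k : ℝ) * Real.log (1 + y * Real.sqrt (2 / (k : ℝ))))
      = Real.sqrt (2 / (k : ℝ)) ^ k * (Real.sqrt ((k : ℝ) / 2) + y) ^ k := by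
    rw [Real.exp_nat_mul, Real.exp_log h1pos, h1, mul_pow]
  -- Stirling: factorial in terms of stirlingSeq
  have hsqk : 0 < Real.sqrt (2 * (k : ℝ)) := Real.sqrt_pos.mpr (by positivity)
  have hkepos : (0 : ℝ) < (k : ℝ) / Real.exp 1 := by positivity
  have hspos : 0 < Stirling.stirlingSeq k := by
    rw [Stirling.stirlingSeq]
    exact div_pos (by exact_mod_cast Nat.factorial_pos k)
      (mul_pos hsqk (pow_pos hkepos k))
  have hfact : (Nat.factorial k : ℝ)
      = Stirling.stirlingSeq k * (Real.sqrt (2 * (k : ℝ)) * ((k : ℝ) / Real.exp 1) ^ k) := by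
    rw [Stirling.stirlingSeq, div_mul_cancel₀]
    exact ne_of_gt (mul_pos hsqk (pow_pos hkepos k))
  -- split the square roots
  have hsqrtfac : Real.sqrt (2 ^ k / (Nat.factorial k : ℝ))
      = Real.sqrt 2 ^ k / (Real.sqrt (Stirling.stirlingSeq k) *
          (Real.sqrt (Real.sqrt (2 * (k : ℝ))) * Real.sqrt ((k : ℝ) / Real.exp 1) ^ k)) := by
    rw [hfact, Real.sqrt_div (by positivity), Real.sqrt_mul hspos.le,
      Real.sqrt_mul (Real.sqrt_nonneg _), sqrt_pow_nat (by norm_num : (0:ℝ) ≤ 2),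
      sqrt_pow_nat hkepos.le]
  -- split the quartic root
  have hrpow : (2 * Real.pi * (k : ℝ)) ^ ((1 : ℝ) / 4)
      = Real.pi ^ ((1 : ℝ) / 4) * Real.sqrt (Real.sqrt (2 * (k : ℝ))) := by
    rw [show 2 * Real.pi * (k : ℝ) = Real.pi * (2 * (k : ℝ)) by ring,
      Real.mul_rpow Real.pi_pos.le (by positivity)]
    congr 1
    rw [Real.sqrt_eq_rpow, Real.sqrt_eq_rpow, ← Real.rpow_mul (by positivity)]
    norm_num
  -- (√e)^k = exp(k/2)
  have hek : Real.sqrt (Real.exp 1) ^ k = Real.exp ((k : ℝ) / 2) := by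
    have h : Real.sqrt (Real.exp 1) = Real.exp ((1 : ℝ) / 2) := by
      rw [show Real.exp 1 = Real.exp ((1 : ℝ) / 2) * Real.exp ((1 : ℝ) / 2) by
        rw [← Real.exp_add]; norm_num, Real.sqrt_mul_self (Real.exp_pos _).le]
    rw [h, ← Real.exp_nat_mul]
    congr 1; ring
  have hprod : Real.sqrt (2 / (k : ℝ)) * Real.sqrt ((k : ℝ) / Real.exp 1) *
      Real.sqrt (Real.exp 1) = Real.sqrt 2 := by
    rw [← Real.sqrt_mul (by positivity), ← Real.sqrt_mul (by positivity)]
    congr 1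
    field_simp
  have hBpos : 0 < Real.sqrt ((k : ℝ) / Real.exp 1) := Real.sqrt_pos.mpr hkepos
  have hi : Real.sqrt (2 / (k : ℝ)) ^ k
      = Real.sqrt 2 ^ k * Real.exp (-((k : ℝ) / 2)) / Real.sqrt ((k : ℝ) / Real.exp 1) ^ k := by
    have h : (Real.sqrt (2 / (k : ℝ)) * Real.sqrt ((k : ℝ) / Real.exp 1) *
        Real.sqrt (Real.exp 1)) ^ k = Real.sqrt 2 ^ k := by rw [hprod]
    rw [mul_pow, mul_pow, hek] at h
    rw [Real.exp_neg]
    field_simp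
    linear_combination h
  -- assemble
  rw [show (k : ℝ) * Real.log (1 + y * Real.sqrt (2 / (k:ℝ))) - y * Real.sqrt (2 * (k:ℝ)) - y ^ 2
      = (k : ℝ) * Real.log (1 + y * Real.sqrt (2 / (k:ℝ))) - (y * Real.sqrt (2 * (k:ℝ)) + y ^ 2)
      by ring, Real.exp_sub, hexpk, hi, hexp2,
    show -((k : ℝ) / 2) - y * Real.sqrt (2 * (k:ℝ)) - y ^ 2
      = -((k : ℝ) / 2) - (y * Real.sqrt (2 * (k:ℝ)) + y ^ 2) by ring,
    Real.exp_sub, hsqrtfac, hrpow]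
  have hsnz : Real.sqrt (Stirling.stirlingSeq k) ≠ 0 := ne_of_gt (Real.sqrt_pos.mpr hspos)
  have hqnz : Real.sqrt (Real.sqrt (2 * (k : ℝ))) ≠ 0 :=
    ne_of_gt (Real.sqrt_pos.mpr hsqk)
  have hBnz : Real.sqrt ((k : ℝ) / Real.exp 1) ^ k ≠ 0 := pow_ne_zero _ (ne_of_gt hBpos)
  field_simp [Real.exp_ne_zero]

theorem gaussian_basis_local_profile (y : ℝ) :
    Tendsto
      (fun k : ℕ =>
        (2 * Real.pi * (k : ℝ)) ^ ((1 : ℝ) / 4) *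
          Real.sqrt (2 ^ k / (Nat.factorial k : ℝ)) *
          (Real.sqrt ((k : ℝ) / 2) + y) ^ k *
          Real.exp (-(Real.sqrt ((k : ℝ) / 2) + y) ^ 2))
      atTop (nhds (Real.exp (-2 * y ^ 2))) := by
  have hq : Real.sqrt (Real.sqrt Real.pi) = Real.pi ^ ((1 : ℝ) / 4) := by
    rw [Real.sqrt_eq_rpow, Real.sqrt_eq_rpow, ← Real.rpow_mul Real.pi_pos.le]
    norm_num
  have hqnz : Real.sqrt (Real.sqrt Real.pi) ≠ 0 := by
    rw [hq]; positivity
  have hstir : Tendsto (fun k : ℕ => Real.pi ^ ((1 : ℝ) / 4) /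
      Real.sqrt (Stirling.stirlingSeq k)) atTop (nhds 1) := by
    have h1 : Tendsto (fun k : ℕ => Real.sqrt (Stirling.stirlingSeq k)) atTop
        (nhds (Real.sqrt (Real.sqrt Real.pi))) :=
      (Real.continuous_sqrt.tendsto _).comp Stirling.tendsto_stirlingSeq_sqrt_pi
    have h2 := (tendsto_const_nhds (x := Real.pi ^ ((1 : ℝ) / 4))).div h1 hqnz
    rw [hq, div_self (by positivity : Real.pi ^ ((1 : ℝ) / 4) ≠ 0)] at h2
    exact h2
  have hexp : Tendsto (fun k : ℕ => Real.exp ((k : ℝ) * Real.log (1 + y * Real.sqrt (2 / k))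
      - y * Real.sqrt (2 * k) - y ^ 2)) atTop (nhds (Real.exp (-2 * y ^ 2))) := by
    have h1 := (core_limit y).sub_const (y ^ 2)
    have h2 := (Real.continuous_exp.tendsto _).comp h1
    have h3 : -y ^ 2 - y ^ 2 = -2 * y ^ 2 := by ring
    rw [h3] at h2
    exact h2
  have hmul := hstir.mul hexp
  rw [one_mul] at hmul
  apply hmul.congr'
  filter_upwards [eventually_gt_atTop ⌈2 * y ^ 2⌉₊] with k hk
  have hk' : 2 * y ^ 2 < (k : ℝ) := by
    have h1 : 2 * y ^ 2 ≤ (⌈2 * y ^ 2⌉₊ : ℝ) := Nat.le_ceil _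
    have h2 : (⌈2 * y ^ 2⌉₊ : ℝ) < (k : ℝ) := by exact_mod_cast hk
    linarith
  exact key_identity y k hk'
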